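/- arXiv:1710.03172 — 2 statements merged into one kernel-verified Lean document; each statement's English description precedes it below -/
import Mathlib

section
/- Let X, Y, Z be Banach spaces, Y₁ ⊆ Y a subspace with continuous inclusion, A : X → Y a bounded injective linear operator, K : X → Z a compact linear operator, and X₁ ⊆ X a linear subspace mapped into Y₁ by A. Suppose there exists C > 0 such that ‖f‖_X ≤ C‖Af‖_{Y₁} + ‖Kf‖_Z for all f ∈ X₁. Then there exists C' > 0 such that ‖f‖_X ≤ C'‖Af‖_{Y₁} for all f ∈ X₁. -/
/-- Uniqueness-implies-stability lemma: if `‖f‖ ≤ C‖Af‖_{Y₁} + ‖Kf‖_Z` on a subspace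
`X₁` mapped by the injective bounded operator `A` into `Y₁`, with `K` compact, then
`‖f‖ ≤ C'‖Af‖_{Y₁}` on `X₁`. -/
theorem stability_from_uniqueness
    {X Y Z Y₁ : Type*}
    [NormedAddCommGroup X] [NormedSpace ℝ X] [CompleteSpace X]
    [NormedAddCommGroup Y] [NormedSpace ℝ Y] [CompleteSpace Y]
    [NormedAddCommGroup Z] [NormedSpace ℝ Z] [CompleteSpace Z]
    [NormedAddCommGroup Y₁] [NormedSpace ℝ Y₁]
    (ι : Y₁ →L[ℝ] Y) (hι : Function.Injective ι)
    (A : X →L[ℝ] Y) (hA : Function.Injective A)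
    (K : X →L[ℝ] Z) (hK : IsCompactOperator K)
    (X₁ : Submodule ℝ X)
    (A₁ : X₁ →ₗ[ℝ] Y₁) (hA₁ : ∀ f : X₁, ι (A₁ f) = A (f : X))
    (C : ℝ) (hC : 0 < C)
    (hEst : ∀ f : X₁, ‖(f : X)‖ ≤ C * ‖A₁ f‖ + ‖K (f : X)‖) :
    ∃ C' > 0, ∀ f : X₁, ‖(f : X)‖ ≤ C' * ‖A₁ f‖ := by
  by_contra h
  push_neg at h
  -- for each n, get a unit vector g n in X₁ with ‖A₁ (g n)‖ ≤ 1/(n+1)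
  have hseq : ∀ n : ℕ, ∃ g : X₁, ‖(g : X)‖ = 1 ∧ ‖A₁ g‖ ≤ 1 / (n + 1) := by
    intro n
    obtain ⟨f, hf⟩ := h (n + 1) (by positivity)
    have hfne : (f : X) ≠ 0 := by
      intro h0
      have : ‖(f : X)‖ = 0 := by rw [h0, norm_zero]
      nlinarith [norm_nonneg (A₁ f)]
    have hfn : (0 : ℝ) < ‖(f : X)‖ := norm_pos_iff.mpr hfne
    refine ⟨‖(f : X)‖⁻¹ • f, ?_, ?_⟩
    · have : ((‖(f : X)‖⁻¹ • f : X₁) : X) = ‖(f : X)‖⁻¹ • (f : X) := rfl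
      rw [this, norm_smul, norm_inv, norm_norm, inv_mul_cancel₀ hfn.ne']
    · rw [map_smul, norm_smul, norm_inv, norm_norm]
      rw [inv_mul_le_iff₀ hfn]
      have : (n + 1 : ℝ) * ‖A₁ f‖ < ‖(f : X)‖ := hf
      rw [mul_one_div, le_div_iff₀ (by positivity : (0:ℝ) < (n:ℝ) + 1)]
      nlinarith
  choose g hg1 hg2 using hseq
  -- K (g n) lies in a compact set
  have hcomp : IsCompact (closure (K '' Metric.closedBall 0 1)) :=
    hK.isCompact_closure_image_closedBall 1
  have hmem : ∀ n, K ((g n : X)) ∈ closure (K '' Metric.closedBall 0 1) := by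
    intro n
    exact subset_closure ⟨(g n : X), by simp [hg1 n], rfl⟩
  obtain ⟨z, -, φ, hφmono, hφtend⟩ := hcomp.tendsto_subseq hmem
  -- the error sequence tends to 0
  set u : ℕ → ℝ := fun n => C * ‖A₁ (g (φ n))‖ + ‖K ((g (φ n) : X)) - z‖ with hu
  have hA₁tend : Filter.Tendsto (fun n => ‖A₁ (g (φ n))‖) Filter.atTop (nhds 0) := by
    apply squeeze_zero (fun n => norm_nonneg _) (fun n => hg2 (φ n))
    apply Filter.Tendsto.comp (tendsto_one_div_add_atTop_nhds_zero_nat)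
    exact (StrictMono.tendsto_atTop hφmono).comp Filter.tendsto_id |>.comp Filter.tendsto_id
      |>.congr (fun _ => rfl) |>.mono_left le_rfl
  have hutend : Filter.Tendsto u Filter.atTop (nhds 0) := by
    have h1 : Filter.Tendsto (fun n => ‖K ((g (φ n) : X)) - z‖) Filter.atTop (nhds 0) := by
      rw [← tendsto_iff_norm_sub_tendsto_zero] ; exact hφtend
    have := (hA₁tend.const_mul C).add h1
    simpa using this
  -- (g (φ n)) is Cauchy in X
  have hbound : ∀ n m, ‖(g (φ n) : X) - (g (φ m) : X)‖ ≤ u n + u m := by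
    intro n m
    have h1 := hEst (g (φ n) - g (φ m))
    have hcoe : ((g (φ n) - g (φ m) : X₁) : X) = (g (φ n) : X) - (g (φ m) : X) := rfl
    rw [hcoe, map_sub] at h1
    have h2 : ‖A₁ (g (φ n)) - A₁ (g (φ m))‖ ≤ ‖A₁ (g (φ n))‖ + ‖A₁ (g (φ m))‖ :=
      norm_sub_le _ _
    have h3 : ‖K ((g (φ n) : X) - (g (φ m) : X))‖
        ≤ ‖K ((g (φ n) : X)) - z‖ + ‖K ((g (φ m) : X)) - z‖ := by
      rw [map_sub]
      calc ‖K ((g (φ n) : X)) - K ((g (φ m) : X))‖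
          = ‖(K ((g (φ n) : X)) - z) - (K ((g (φ m) : X)) - z)‖ := by
            rw [sub_sub_sub_cancel_right]
        _ ≤ _ := norm_sub_le _ _
    simp only [hu]
    nlinarith [norm_nonneg (A₁ (g (φ n))), norm_nonneg (A₁ (g (φ m)))]
  have hcauchy : CauchySeq (fun n => (g (φ n) : X)) := by
    rw [Metric.cauchySeq_iff]
    intro ε hε
    rw [Metric.tendsto_atTop] at hutend
    obtain ⟨N, hN⟩ := hutend (ε / 2) (by positivity)
    refine ⟨N, fun m hm n hn => ?_⟩
    have h1 := hN m hm
    have h2 := hN n hn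
    simp only [Real.dist_eq, sub_zero] at h1 h2
    have hum : u m < ε / 2 := lt_of_abs_lt h1
    have hun : u n < ε / 2 := lt_of_abs_lt h2
    calc dist ((g (φ m) : X)) ((g (φ n) : X)) = ‖(g (φ m) : X) - (g (φ n) : X)‖ :=
          dist_eq_norm _ _
      _ ≤ u m + u n := hbound m n
      _ < ε / 2 + ε / 2 := add_lt_add hum hun
      _ = ε := by ring
  obtain ⟨f, hf⟩ := cauchySeq_tendsto_of_complete hcauchy
  -- ‖f‖ = 1
  have hnf : ‖f‖ = 1 := by
    have := (continuous_norm.tendsto f).comp hf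
    have heq : (fun n => ‖(g (φ n) : X)‖) = fun _ => (1 : ℝ) := funext fun n => hg1 (φ n)
    rw [show ((fun x => ‖x‖) ∘ fun n => (g (φ n) : X)) = fun n => ‖(g (φ n) : X)‖ from rfl,
      heq] at this
    exact (tendsto_const_nhds_iff.mp this).symm
  -- A f = 0
  have hAf : A f = 0 := by
    have h1 : Filter.Tendsto (fun n => A ((g (φ n) : X))) Filter.atTop (nhds (A f)) :=
      (A.continuous.tendsto f).comp hf
    have h2 : Filter.Tendsto (fun n => A₁ (g (φ n))) Filter.atTop (nhds 0) := by
      rw [tendsto_zero_iff_norm_tendsto_zero]; exact hA₁tend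
    have h3 : Filter.Tendsto (fun n => ι (A₁ (g (φ n)))) Filter.atTop (nhds (ι 0)) :=
      (ι.continuous.tendsto 0).comp h2
    have heq : (fun n => ι (A₁ (g (φ n)))) = fun n => A ((g (φ n) : X)) :=
      funext fun n => hA₁ (g (φ n))
    rw [heq, map_zero] at h3
    exact tendsto_nhds_unique h1 h3
  have : f = 0 := hA (by rw [hAf, map_zero])
  rw [this, norm_zero] at hnf
  norm_num at hnf
end

section
/- Let w : ℝⁿ-valued, w(y,τ) = ∫₀^τ K_s(G)(y) ds where K_s is the integral operator with matrix kernel k_s(y,z) satisfying |k_s(y,z)| ≤ C s^{-1/2} e^{-c(y-z)²/s} (τ-s)^{-1/2} e^{-cz²/(τ-s)}. Then for every τ ∈ (0,T], ‖w(·,τ)‖_{L²(ℝ)} ≤ C'√τ ‖G‖_{L²(ℝ)} with C' independent of τ. -/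
open MeasureTheory

namespace DuhamelAux

open Real Set
open scoped ENNReal NNReal

/-- Cauchy–Schwarz for lower integrals. -/
lemma lintegral_cs {α : Type*} [MeasurableSpace α] {μ : Measure α} {f g : α → ℝ≥0∞}
    (hf : AEMeasurable f μ) (hg : AEMeasurable g μ) :
    (∫⁻ a, f a * g a ∂μ) ^ 2 ≤ (∫⁻ a, f a ∂μ) * ∫⁻ a, f a * (g a) ^ 2 ∂μ := by
  have h2 : (2:ℝ).HolderConjugate 2 := Real.HolderConjugate.two_two
  have hf2 : AEMeasurable (fun a => f a ^ (1/2 : ℝ)) μ := hf.pow_const _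
  have key := ENNReal.lintegral_mul_le_Lp_mul_Lq μ h2 hf2 (hf2.mul hg)
  have e1 : ∀ x : ℝ≥0∞, (x ^ (1/2:ℝ)) ^ (2:ℝ) = x := by
    intro x; rw [← ENNReal.rpow_mul]; norm_num
  have l1 : ∫⁻ a, f a ^ (1/2:ℝ) * (f a ^ (1/2:ℝ) * g a) ∂μ
      = ∫⁻ a, f a * g a ∂μ := by
    apply lintegral_congr; intro a
    simp only [Pi.mul_apply, ← mul_assoc]
    congr 1
    rw [← ENNReal.rpow_add_of_nonneg _ _ (by norm_num) (by norm_num)]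
    norm_num
  have l2 : ∫⁻ a, (f a ^ (1/2:ℝ)) ^ (2:ℝ) ∂μ = ∫⁻ a, f a ∂μ :=
    lintegral_congr fun a => e1 _
  have l3 : ∫⁻ a, (f a ^ (1/2:ℝ) * g a) ^ (2:ℝ) ∂μ = ∫⁻ a, f a * (g a) ^ 2 ∂μ := by
    apply lintegral_congr; intro a
    rw [ENNReal.mul_rpow_of_nonneg _ _ (by norm_num : (0:ℝ) ≤ 2), e1,
      ← ENNReal.rpow_natCast (g a) 2]
    norm_num
  simp only [Pi.mul_apply] at key
  rw [l1, l2, l3] at key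
  calc (∫⁻ a, f a * g a ∂μ) ^ 2
      ≤ ((∫⁻ a, f a ∂μ) ^ (1/(2:ℝ)) * (∫⁻ a, f a * (g a) ^ 2 ∂μ) ^ (1/(2:ℝ))) ^ 2 :=
        pow_le_pow_left₀ zero_le key 2
    _ = (∫⁻ a, f a ∂μ) * ∫⁻ a, f a * (g a) ^ 2 ∂μ := by
        rw [mul_pow, ← ENNReal.rpow_natCast (_ ^ (1/(2:ℝ))) 2,
          ← ENNReal.rpow_natCast ((∫⁻ a, f a * (g a) ^ 2 ∂μ) ^ (1/(2:ℝ))) 2,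
          ← ENNReal.rpow_mul, ← ENNReal.rpow_mul]
        norm_num

/-- Gaussian lintegral. -/
lemma lintegral_gauss {b : ℝ} (hb : 0 < b) (a : ℝ) :
    ∫⁻ x : ℝ, ENNReal.ofReal (Real.exp (-(b * (x - a) ^ 2))) = ENNReal.ofReal (Real.sqrt (π / b)) := by
  have := lintegral_sub_right_eq_self (μ := (volume : Measure ℝ))
    (fun y => ENNReal.ofReal (Real.exp (-(b * y ^ 2)))) a
  rw [show (fun x:ℝ => ENNReal.ofReal (Real.exp (-(b*(x-a)^2)))) =
    (fun x:ℝ => (fun y:ℝ => ENNReal.ofReal (Real.exp (-(b*y^2)))) (x - a)) from rfl, this]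
  rw [← ofReal_integral_eq_lintegral_ofReal (by simpa [neg_mul] using integrable_exp_neg_mul_sq hb)
    (Filter.Eventually.of_forall fun x => (Real.exp_pos _).le)]
  congr 1
  simpa [neg_mul] using integral_gaussian b

lemma sqrt_inv_intervalIntegrable {τ : ℝ} (hτ : 0 < τ) :
    IntervalIntegrable (fun x : ℝ => (Real.sqrt x)⁻¹) volume 0 τ := by
  have h : IntervalIntegrable (fun x : ℝ => x ^ (-(1/2) : ℝ)) volume 0 τ :=
    intervalIntegral.intervalIntegrable_rpow' (by norm_num)
  rw [intervalIntegrable_iff, uIoc_of_le hτ.le] at h ⊢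
  refine h.congr_fun ?_ measurableSet_Ioc
  intro x hx
  show x ^ (-(1/2):ℝ) = (Real.sqrt x)⁻¹
  rw [Real.sqrt_eq_rpow, ← Real.rpow_neg hx.1.le]

lemma integral_sqrt_inv {τ : ℝ} (hτ : 0 < τ) :
    ∫ x in (0:ℝ)..τ, (Real.sqrt x)⁻¹ = 2 * Real.sqrt τ := by
  have : ∫ x in (0:ℝ)..τ, (Real.sqrt x)⁻¹ = ∫ x in (0:ℝ)..τ, x ^ (-(1/2) : ℝ) := by
    apply intervalIntegral.integral_congr
    intro x hx
    rw [uIcc_of_le hτ.le] at hx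
    show (Real.sqrt x)⁻¹ = x ^ (-(1/2):ℝ)
    rw [Real.sqrt_eq_rpow, ← Real.rpow_neg hx.1]
  rw [this, integral_rpow (Or.inl (by norm_num))]
  rw [Real.sqrt_eq_rpow]
  rw [Real.zero_rpow (by norm_num)]
  norm_num
  ring

/-- `∫⁻ s in Ioo 0 τ, (√(τ-s))⁻¹ = 2√τ`. -/
lemma lintegral_sqrt_sub_inv {τ : ℝ} (hτ : 0 < τ) :
    ∫⁻ s in Set.Ioo 0 τ, ENNReal.ofReal ((Real.sqrt (τ - s))⁻¹)
      = ENNReal.ofReal (2 * Real.sqrt τ) := by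
  have hII : IntervalIntegrable (fun s : ℝ => (Real.sqrt (τ - s))⁻¹) volume 0 τ := by
    have := (sqrt_inv_intervalIntegrable hτ).comp_sub_left τ
    simpa using this.symm
  have hInt : IntegrableOn (fun s : ℝ => (Real.sqrt (τ - s))⁻¹) (Set.Ioo 0 τ) volume := by
    rw [intervalIntegrable_iff, uIoc_of_le hτ.le] at hII
    exact hII.mono_set Set.Ioo_subset_Ioc_self
  rw [← ofReal_integral_eq_lintegral_ofReal hInt
    (Filter.Eventually.of_forall fun x => by positivity)]
  congr 1
  rw [← MeasureTheory.integral_Ioc_eq_integral_Ioo,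
    ← intervalIntegral.integral_of_le hτ.le]
  have := intervalIntegral.integral_comp_sub_left (a := 0) (b := τ)
    (fun x : ℝ => (Real.sqrt x)⁻¹) τ
  simpa [integral_sqrt_inv hτ] using this

lemma sq_sum_le {ι : Type*} (s : Finset ι) (a : ι → ℝ≥0∞) :
    (∑ i ∈ s, a i) ^ 2 ≤ 2 * s.card * ∑ i ∈ s, (a i) ^ 2 := by
  have h : ∀ x y : ℝ≥0∞, x * y ≤ x ^ 2 + y ^ 2 := by
    intro x y
    rcases le_total x y with h | h
    · calc x * y ≤ y * y := mul_le_mul_left h y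
        _ ≤ x ^ 2 + y ^ 2 := by rw [← sq]; exact le_add_self
    · calc x * y ≤ x * x := mul_le_mul_right h x
        _ ≤ x ^ 2 + y ^ 2 := by rw [← sq]; exact le_self_add
  calc (∑ i ∈ s, a i) ^ 2 = ∑ i ∈ s, ∑ j ∈ s, a i * a j := by
        rw [sq, Finset.sum_mul_sum]
    _ ≤ ∑ i ∈ s, ∑ j ∈ s, (a i ^ 2 + a j ^ 2) :=
        Finset.sum_le_sum fun i _ => Finset.sum_le_sum fun j _ => h _ _
    _ = 2 * s.card * ∑ i ∈ s, (a i) ^ 2 := by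
        simp only [Finset.sum_add_distrib, Finset.sum_const, nsmul_eq_mul]
        rw [← Finset.mul_sum]
        ring

lemma eLpNorm_two_sq (f : ℝ → ℝ) :
    eLpNorm f 2 (volume : Measure ℝ) ^ 2 = ∫⁻ y, (‖f y‖₊ : ℝ≥0∞) ^ 2 := by
  rw [eLpNorm_eq_lintegral_rpow_enorm_toReal (by norm_num) (by norm_num)]
  rw [← ENNReal.rpow_natCast (_ ^ _) 2, ← ENNReal.rpow_mul]
  norm_num
  rfl

end DuhamelAux

open scoped ENNReal NNReal

set_option maxHeartbeats 1000000

/-- Duhamel `L²` bound: if `w(y,τ) = ∫₀^τ K_s(G)(y) ds` where the matrix kernel of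
`K_s` satisfies the Gaussian bound
`|k_s(y,z)| ≤ C s^{-1/2} e^{-c(y-z)²/s} (τ-s)^{-1/2} e^{-cz²/(τ-s)}`, then
`‖w(·,τ)‖_{L²(ℝ)ⁿ} ≤ C'√τ ‖G‖_{L²(ℝ)ⁿ}` with `C'` independent of `τ ∈ (0,T]`. -/
theorem duhamel_L2_bound
    (n : ℕ) (C c T : ℝ) (hC : 0 < C) (hc : 0 < c) (hT : 0 < T) :
    ∃ C' > 0, ∀ τ : ℝ, 0 < τ → τ ≤ T →
      ∀ (k : ℝ → ℝ → ℝ → Matrix (Fin n) (Fin n) ℝ) (G : Fin n → ℝ → ℝ)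
        (w : Fin n → ℝ → ℝ),
        (∀ i j s, Measurable (fun p : ℝ × ℝ => k s p.1 p.2 i j)) →
        (∀ j, MemLp (G j) 2 (volume : Measure ℝ)) →
        (∀ s ∈ Set.Ioo 0 τ, ∀ y z i j,
          |k s y z i j| ≤ C * (Real.sqrt s)⁻¹ * Real.exp (-c * (y - z) ^ 2 / s) *
            (Real.sqrt (τ - s))⁻¹ * Real.exp (-c * z ^ 2 / (τ - s))) →
        (∀ i y, w i y = ∫ s in (0:ℝ)..τ, ∫ z : ℝ, ∑ j, k s y z i j * G j z) →
        ∑ i, (eLpNorm (w i) 2 (volume : Measure ℝ)) ^ 2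
          ≤ ENNReal.ofReal (C' ^ 2 * τ) *
              ∑ j, (eLpNorm (G j) 2 (volume : Measure ℝ)) ^ 2 := by
  classical
  set κ : ℝ := C * Real.sqrt (Real.pi / c) with hκdef
  have hκ : 0 < κ := by
    have := Real.pi_pos
    positivity
  refine ⟨4 * (n + 1) * κ, by positivity, ?_⟩
  intro τ hτ hτT k G w hkm hG hbnd hw
  have hτs : (0:ℝ) < Real.sqrt τ := Real.sqrt_pos.2 hτ
  -- the dominating kernel
  set b : ℝ → ℝ → ℝ → ℝ := fun s y z =>
    C * (Real.sqrt s)⁻¹ * Real.exp (-c * (y - z) ^ 2 / s) * (Real.sqrt (τ - s))⁻¹ *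
      Real.exp (-c * z ^ 2 / (τ - s)) with hbdef
  have hb0 : ∀ s y z, 0 ≤ b s y z := fun s y z => by
    simp only [hbdef]; positivity
  set Q : ℝ → ℝ × ℝ → ℝ≥0∞ := fun y p => ENNReal.ofReal (b p.1 y p.2) with hQdef
  have hQm : ∀ y, Measurable (Q y) := by
    intro y
    simp only [hQdef, hbdef]
    fun_prop
  have hQ2m : Measurable (fun q : ℝ × (ℝ × ℝ) => Q q.1 q.2) := by
    simp only [hQdef, hbdef]
    fun_prop
  set ν : Measure (ℝ × ℝ) := (volume.restrict (Set.Ioo 0 τ)).prod volume with hνdef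
  -- measurable version of G
  set G' : Fin n → ℝ → ℝ := fun j => (hG j).1.mk (G j) with hG'def
  have hG'm : ∀ j, Measurable (G' j) := fun j => (hG j).1.stronglyMeasurable_mk.measurable
  have hGae : ∀ j, G j =ᵐ[volume] G' j := fun j => (hG j).1.ae_eq_mk
  set g : ℝ → ℝ≥0∞ := fun z => ∑ j, (‖G' j z‖₊ : ℝ≥0∞) with hgdef
  have hgm : Measurable g := Finset.measurable_sum _ fun j _ => (hG'm j).enorm
  have hgt : ∀ z, g z ≠ ⊤ := fun z => by
    simp only [hgdef]
    exact (ENNReal.sum_lt_top.2 fun j _ => ENNReal.coe_lt_top).ne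
  have hgae : ∀ᵐ z ∂(volume : Measure ℝ), (∑ j, (‖G j z‖₊ : ℝ≥0∞)) = g z := by
    have h := (MeasureTheory.ae_all_iff).2 hGae
    filter_upwards [h] with z hz
    simp only [hgdef]
    exact Finset.sum_congr rfl fun j _ => by rw [hz j]
  -- the Schur bound constant
  set A : ℝ≥0∞ := ENNReal.ofReal κ * ENNReal.ofReal (2 * Real.sqrt τ) with hAdef
  have hAne : A ≠ ⊤ := ENNReal.mul_ne_top ENNReal.ofReal_ne_top ENNReal.ofReal_ne_top
  -- first marginal bound
  have hS1inner : ∀ s ∈ Set.Ioo (0:ℝ) τ, ∀ y,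
      ∫⁻ z, Q y (s, z) ≤ ENNReal.ofReal κ * ENNReal.ofReal ((Real.sqrt (τ - s))⁻¹) := by
    intro s hs y
    have hs0 : 0 < s := hs.1
    have hsτ : 0 < τ - s := sub_pos.2 hs.2
    have hss : Real.sqrt s ≠ 0 := (Real.sqrt_pos.2 hs0).ne'
    have hK0 : 0 ≤ C * (Real.sqrt s)⁻¹ * (Real.sqrt (τ - s))⁻¹ := by positivity
    calc ∫⁻ z, Q y (s, z)
        ≤ ∫⁻ z, ENNReal.ofReal (C * (Real.sqrt s)⁻¹ * (Real.sqrt (τ - s))⁻¹)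
            * ENNReal.ofReal (Real.exp (-(c / s * (z - y) ^ 2))) := by
          apply lintegral_mono
          intro z
          simp only [hQdef]
          rw [← ENNReal.ofReal_mul hK0]
          apply ENNReal.ofReal_le_ofReal
          have h1 : Real.exp (-c * z ^ 2 / (τ - s)) ≤ 1 := by
            rw [Real.exp_le_one_iff]
            apply div_nonpos_of_nonpos_of_nonneg _ hsτ.le
            nlinarith [sq_nonneg z]
          have h2 : b s y z = (C * (Real.sqrt s)⁻¹ * (Real.sqrt (τ - s))⁻¹ *
              Real.exp (-(c / s * (z - y) ^ 2))) * Real.exp (-c * z ^ 2 / (τ - s)) := by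
            simp only [hbdef]
            rw [show -c * (y - z) ^ 2 / s = -(c / s * (z - y) ^ 2) by ring]
            ring
          rw [h2]
          exact mul_le_of_le_one_right (by positivity) h1
      _ = ENNReal.ofReal (C * (Real.sqrt s)⁻¹ * (Real.sqrt (τ - s))⁻¹)
            * ENNReal.ofReal (Real.sqrt (Real.pi / (c / s))) := by
          rw [lintegral_const_mul' _ _ ENNReal.ofReal_ne_top,
            DuhamelAux.lintegral_gauss (div_pos hc hs0) y]
      _ = ENNReal.ofReal κ * ENNReal.ofReal ((Real.sqrt (τ - s))⁻¹) := by
          rw [← ENNReal.ofReal_mul hK0, ← ENNReal.ofReal_mul hκ.le]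
          congr 1
          have e : Real.sqrt (Real.pi / (c / s)) = Real.sqrt (Real.pi / c) * Real.sqrt s := by
            rw [show Real.pi / (c / s) = Real.pi / c * s by field_simp]
            exact Real.sqrt_mul (by positivity) s
          rw [e, hκdef]
          field_simp
  -- second marginal bound
  have hS2inner : ∀ s ∈ Set.Ioo (0:ℝ) τ, ∀ z,
      ∫⁻ y, Q y (s, z) ≤ ENNReal.ofReal κ * ENNReal.ofReal ((Real.sqrt (τ - s))⁻¹) := by
    intro s hs z
    have hs0 : 0 < s := hs.1
    have hsτ : 0 < τ - s := sub_pos.2 hs.2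
    have hss : Real.sqrt s ≠ 0 := (Real.sqrt_pos.2 hs0).ne'
    have h1 : Real.exp (-c * z ^ 2 / (τ - s)) ≤ 1 := by
      rw [Real.exp_le_one_iff]
      apply div_nonpos_of_nonpos_of_nonneg _ hsτ.le
      nlinarith [sq_nonneg z]
    have hK0 : 0 ≤ C * (Real.sqrt s)⁻¹ * (Real.sqrt (τ - s))⁻¹ *
        Real.exp (-c * z ^ 2 / (τ - s)) := by positivity
    calc ∫⁻ y, Q y (s, z)
        = ∫⁻ y, ENNReal.ofReal (C * (Real.sqrt s)⁻¹ * (Real.sqrt (τ - s))⁻¹ *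
              Real.exp (-c * z ^ 2 / (τ - s)))
            * ENNReal.ofReal (Real.exp (-(c / s * (y - z) ^ 2))) := by
          apply lintegral_congr
          intro y
          simp only [hQdef]
          rw [← ENNReal.ofReal_mul hK0]
          congr 1
          simp only [hbdef]
          rw [show -c * (y - z) ^ 2 / s = -(c / s * (y - z) ^ 2) by ring]
          ring
      _ = ENNReal.ofReal (C * (Real.sqrt s)⁻¹ * (Real.sqrt (τ - s))⁻¹ *
              Real.exp (-c * z ^ 2 / (τ - s)))
            * ENNReal.ofReal (Real.sqrt (Real.pi / (c / s))) := by
          rw [lintegral_const_mul' _ _ ENNReal.ofReal_ne_top,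
            DuhamelAux.lintegral_gauss (div_pos hc hs0) z]
      _ ≤ ENNReal.ofReal κ * ENNReal.ofReal ((Real.sqrt (τ - s))⁻¹) := by
          rw [← ENNReal.ofReal_mul hK0, ← ENNReal.ofReal_mul hκ.le]
          apply ENNReal.ofReal_le_ofReal
          have e : Real.sqrt (Real.pi / (c / s)) = Real.sqrt (Real.pi / c) * Real.sqrt s := by
            rw [show Real.pi / (c / s) = Real.pi / c * s by field_simp]
            exact Real.sqrt_mul (by positivity) s
          rw [e, hκdef]
          have e2 : C * (Real.sqrt s)⁻¹ * (Real.sqrt (τ - s))⁻¹ *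
              Real.exp (-c * z ^ 2 / (τ - s)) * (Real.sqrt (Real.pi / c) * Real.sqrt s)
              = (C * Real.sqrt (Real.pi / c) * (Real.sqrt (τ - s))⁻¹) *
                Real.exp (-c * z ^ 2 / (τ - s)) := by
            field_simp
          rw [e2]
          calc (C * Real.sqrt (Real.pi / c) * (Real.sqrt (τ - s))⁻¹) *
                Real.exp (-c * z ^ 2 / (τ - s))
              ≤ (C * Real.sqrt (Real.pi / c) * (Real.sqrt (τ - s))⁻¹) * 1 := by
                apply mul_le_mul_of_nonneg_left h1
                positivity
            _ = C * Real.sqrt (Real.pi / c) * (Real.sqrt (τ - s))⁻¹ := mul_one _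
            _ = C * Real.sqrt (Real.pi / c) * (Real.sqrt (τ - s))⁻¹ := rfl
  have hβ : ∫⁻ s in Set.Ioo (0:ℝ) τ,
      (ENNReal.ofReal κ * ENNReal.ofReal ((Real.sqrt (τ - s))⁻¹)) = A := by
    rw [lintegral_const_mul' _ _ ENNReal.ofReal_ne_top,
      DuhamelAux.lintegral_sqrt_sub_inv hτ]
  have hS1 : ∀ y, ∫⁻ p, Q y p ∂ν ≤ A := by
    intro y
    rw [hνdef, lintegral_prod _ (hQm y).aemeasurable]
    refine le_trans (setLIntegral_mono' measurableSet_Ioo fun s hs => hS1inner s hs y) ?_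
    exact hβ.le
  -- pointwise domination of w
  have key1 : ∀ i y, (‖w i y‖₊ : ℝ≥0∞) ≤ ∫⁻ p, Q y p * g p.2 ∂ν := by
    intro i y
    rw [hw i y, intervalIntegral.integral_of_le hτ.le]
    have meas1 : AEMeasurable (fun p : ℝ × ℝ => Q y p * g p.2) ν :=
      ((hQm y).mul (hgm.comp measurable_snd)).aemeasurable
    calc (‖∫ s in Set.Ioc (0:ℝ) τ, (∫ z : ℝ, ∑ j, k s y z i j * G j z) ∂volume‖₊ : ℝ≥0∞)
        ≤ ∫⁻ s in Set.Ioc (0:ℝ) τ, ‖∫ z : ℝ, ∑ j, k s y z i j * G j z‖₊ ∂volume :=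
          enorm_integral_le_lintegral_enorm _
      _ = ∫⁻ s in Set.Ioo (0:ℝ) τ, ‖∫ z : ℝ, ∑ j, k s y z i j * G j z‖₊ ∂volume := by
          rw [← Measure.restrict_congr_set Ioo_ae_eq_Ioc]
      _ ≤ ∫⁻ s in Set.Ioo (0:ℝ) τ, (∫⁻ z, Q y (s, z) * g z) ∂volume := by
          apply setLIntegral_mono' measurableSet_Ioo
          intro s hs
          calc (‖∫ z : ℝ, ∑ j, k s y z i j * G j z‖₊ : ℝ≥0∞)
              ≤ ∫⁻ z, ‖∑ j, k s y z i j * G j z‖₊ := enorm_integral_le_lintegral_enorm _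
            _ ≤ ∫⁻ z, Q y (s, z) * (∑ j, (‖G j z‖₊ : ℝ≥0∞)) := by
                apply lintegral_mono
                intro z
                calc ((‖∑ j, k s y z i j * G j z‖₊ : ℝ≥0) : ℝ≥0∞)
                    ≤ ∑ j, ((‖k s y z i j * G j z‖₊ : ℝ≥0) : ℝ≥0∞) := by
                      rw [← ENNReal.coe_finset_sum]
                      exact_mod_cast nnnorm_sum_le Finset.univ
                        (fun j => k s y z i j * G j z)
                  _ ≤ ∑ j, Q y (s, z) * (‖G j z‖₊ : ℝ≥0∞) := by
                      apply Finset.sum_le_sum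
                      intro j _
                      rw [nnnorm_mul, ENNReal.coe_mul]
                      apply mul_le_mul_left
                      rw [show ((‖k s y z i j‖₊ : ℝ≥0) : ℝ≥0∞) = ‖k s y z i j‖ₑ from rfl, Real.enorm_eq_ofReal_abs]
                      simp only [hQdef]
                      apply ENNReal.ofReal_le_ofReal
                      simpa only [hbdef] using hbnd s hs y z i j
                  _ = Q y (s, z) * ∑ j, (‖G j z‖₊ : ℝ≥0∞) := by rw [Finset.mul_sum]
            _ = ∫⁻ z, Q y (s, z) * g z := by
                apply lintegral_congr_ae
                filter_upwards [hgae] with z hz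
                rw [hz]
      _ = ∫⁻ p, Q y p * g p.2 ∂ν := by
          rw [hνdef, lintegral_prod _ meas1]
  -- Schur's test
  have main : ∫⁻ y, (∫⁻ p, Q y p * g p.2 ∂ν) ^ 2 ≤ A * (A * ∫⁻ z, g z ^ 2) := by
    have hgs : Measurable fun z : ℝ => g z ^ 2 := hgm.pow_const 2
    have hswapm : AEMeasurable
        (Function.uncurry fun (y : ℝ) (p : ℝ × ℝ) => Q y p * g p.2 ^ 2)
        ((volume : Measure ℝ).prod ν) :=
      (hQ2m.mul (hgs.comp measurable_snd.snd)).aemeasurable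
    have hFm : Measurable (fun p : ℝ × ℝ => (∫⁻ y, Q y (y, p).2 ∂volume) * g p.2 ^ 2) := by
      exact (Measurable.lintegral_prod_left' (μ := (volume : Measure ℝ)) hQ2m).mul
        (hgs.comp measurable_snd)
    have hβm : Measurable (fun s : ℝ =>
        ENNReal.ofReal κ * ENNReal.ofReal ((Real.sqrt (τ - s))⁻¹)) := by fun_prop
    calc ∫⁻ y, (∫⁻ p, Q y p * g p.2 ∂ν) ^ 2
        ≤ ∫⁻ y, A * ∫⁻ p, Q y p * g p.2 ^ 2 ∂ν := by
          apply lintegral_mono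
          intro y
          refine le_trans (DuhamelAux.lintegral_cs (μ := ν) (hQm y).aemeasurable
            ((hgm.comp measurable_snd).aemeasurable)) ?_
          exact mul_le_mul_left (hS1 y) _
      _ = A * ∫⁻ y, ∫⁻ p, Q y p * g p.2 ^ 2 ∂ν := lintegral_const_mul' _ _ hAne
      _ = A * ∫⁻ p, (∫⁻ y, Q y p * g p.2 ^ 2) ∂ν := by
          rw [lintegral_lintegral_swap hswapm]
      _ = A * ∫⁻ p, (∫⁻ y, Q y p) * g p.2 ^ 2 ∂ν := by
          congr 1
          apply lintegral_congr
          intro p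
          exact lintegral_mul_const' _ _ (ENNReal.pow_ne_top (hgt p.2))
      _ = A * ∫⁻ s in Set.Ioo (0:ℝ) τ, ∫⁻ z, (∫⁻ y, Q y (s, z)) * g z ^ 2 ∂volume := by
          rw [hνdef, lintegral_prod _ hFm.aemeasurable]
      _ ≤ A * ∫⁻ s in Set.Ioo (0:ℝ) τ,
            (ENNReal.ofReal κ * ENNReal.ofReal ((Real.sqrt (τ - s))⁻¹)) *
              ∫⁻ z, g z ^ 2 ∂volume := by
          apply mul_le_mul_right
          apply setLIntegral_mono' measurableSet_Ioo
          intro s hs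
          calc ∫⁻ z, (∫⁻ y, Q y (s, z)) * g z ^ 2
              ≤ ∫⁻ z, (ENNReal.ofReal κ * ENNReal.ofReal ((Real.sqrt (τ - s))⁻¹)) *
                  g z ^ 2 :=
                lintegral_mono fun z => mul_le_mul_left (hS2inner s hs z) _
            _ = (ENNReal.ofReal κ * ENNReal.ofReal ((Real.sqrt (τ - s))⁻¹)) *
                  ∫⁻ z, g z ^ 2 :=
                lintegral_const_mul' _ _
                  (ENNReal.mul_ne_top ENNReal.ofReal_ne_top ENNReal.ofReal_ne_top)
      _ = A * (A * ∫⁻ z, g z ^ 2) := by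
          congr 1
          rw [lintegral_mul_const _ hβm, hβ]
  -- conclusion
  set S : ℝ≥0∞ := ∑ j, eLpNorm (G j) 2 (volume : Measure ℝ) ^ 2 with hSdef
  have hI : ∫⁻ z, g z ^ 2 ≤ 2 * n * S := by
    calc ∫⁻ z, g z ^ 2 ≤ ∫⁻ z, 2 * n * ∑ j, (‖G' j z‖₊ : ℝ≥0∞) ^ 2 := by
          apply lintegral_mono
          intro z
          have h := DuhamelAux.sq_sum_le (Finset.univ : Finset (Fin n))
            (fun j => (‖G' j z‖₊ : ℝ≥0∞))
          simpa [Finset.card_univ, hgdef] using h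
      _ = 2 * n * ∑ j, ∫⁻ z, (‖G' j z‖₊ : ℝ≥0∞) ^ 2 := by
          rw [lintegral_const_mul'
              _ _ (ENNReal.mul_ne_top ENNReal.ofNat_ne_top (ENNReal.natCast_ne_top n)),
            lintegral_finset_sum _ (f := fun j z => (‖G' j z‖₊ : ℝ≥0∞) ^ 2) (fun j _ => ((hG'm j).enorm).pow_const 2)]
      _ = 2 * n * S := by
          rw [hSdef]
          congr 1
          apply Finset.sum_congr rfl
          intro j _
          rw [DuhamelAux.eLpNorm_two_sq]
          apply lintegral_congr_ae
          filter_upwards [hGae j] with z hz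
          rw [hz]
  calc ∑ i, eLpNorm (w i) 2 (volume : Measure ℝ) ^ 2
      = ∑ i : Fin n, ∫⁻ y, (‖w i y‖₊ : ℝ≥0∞) ^ 2 :=
        Finset.sum_congr rfl fun i _ => DuhamelAux.eLpNorm_two_sq (w i)
    _ ≤ ∑ _i : Fin n, ∫⁻ y, (∫⁻ p, Q y p * g p.2 ∂ν) ^ 2 :=
        Finset.sum_le_sum fun i _ => lintegral_mono fun y =>
          pow_le_pow_left₀ zero_le (key1 i y) 2
    _ = (n : ℝ≥0∞) * ∫⁻ y, (∫⁻ p, Q y p * g p.2 ∂ν) ^ 2 := by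
        rw [Finset.sum_const, Finset.card_univ, Fintype.card_fin, nsmul_eq_mul]
    _ ≤ (n : ℝ≥0∞) * (A * (A * (2 * n * S))) := by
        apply mul_le_mul_right
        exact main.trans (mul_le_mul_right (mul_le_mul_right hI A) A)
    _ ≤ ENNReal.ofReal ((4 * (n + 1) * κ) ^ 2 * τ) * S := by
        have hA : A = ENNReal.ofReal (κ * (2 * Real.sqrt τ)) := by
          rw [hAdef, ← ENNReal.ofReal_mul hκ.le]
        have hstep : (n : ℝ≥0∞) * (A * (A * (2 * n * S))) =
            ((n : ℝ≥0∞) * (ENNReal.ofReal (κ * (2 * Real.sqrt τ)) *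
              (ENNReal.ofReal (κ * (2 * Real.sqrt τ)) * (2 * n)))) * S := by
          rw [hA]; ring
        rw [hstep]
        apply mul_le_mul_left
        have hτ2 : (0:ℝ) ≤ κ * (2 * Real.sqrt τ) := by positivity
        calc (n : ℝ≥0∞) * (ENNReal.ofReal (κ * (2 * Real.sqrt τ)) *
              (ENNReal.ofReal (κ * (2 * Real.sqrt τ)) * (2 * (n : ℝ≥0∞))))
            = ENNReal.ofReal ((n : ℝ) * ((κ * (2 * Real.sqrt τ)) *
                ((κ * (2 * Real.sqrt τ)) * (2 * (n : ℝ))))) := by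
              rw [ENNReal.ofReal_mul (by positivity : (0:ℝ) ≤ (n:ℝ)),
                ENNReal.ofReal_mul hτ2, ENNReal.ofReal_mul hτ2,
                ENNReal.ofReal_mul (by norm_num : (0:ℝ) ≤ 2),
                ENNReal.ofReal_natCast, ENNReal.ofReal_ofNat]
          _ ≤ ENNReal.ofReal ((4 * (n + 1) * κ) ^ 2 * τ) := by
              apply ENNReal.ofReal_le_ofReal
              have hs : Real.sqrt τ * Real.sqrt τ = τ := Real.mul_self_sqrt hτ.le
              have h1 : (n : ℝ) * ((κ * (2 * Real.sqrt τ)) *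
                  ((κ * (2 * Real.sqrt τ)) * (2 * (n : ℝ))))
                  = 8 * (n : ℝ) ^ 2 * κ ^ 2 * τ := by
                linear_combination (8 * (n : ℝ) ^ 2 * κ ^ 2) * hs
              have h2 : (4 * ((n : ℝ) + 1) * κ) ^ 2 * τ
                  = 16 * ((n : ℝ) + 1) ^ 2 * κ ^ 2 * τ := by ring
              rw [h1, h2]
              have hn : (0:ℝ) ≤ (n : ℝ) := Nat.cast_nonneg n
              nlinarith [mul_nonneg (mul_nonneg (sq_nonneg κ) hτ.le) hn,
                mul_nonneg (sq_nonneg κ) hτ.le,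
                mul_nonneg (mul_nonneg (mul_nonneg hn hn) (sq_nonneg κ)) hτ.le]
end
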